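/- Let Φ : ℝ → H be twice continuously differentiable with ‖Φ(τ)‖ = 1 for all τ and gauge ⟨Φ(τ), Φ'(τ)⟩ = 0 for all τ. Fix τ and let P : H → H be the projector P x = ⟨Φ(τ), x⟩ Φ(τ), Q = id − P, and let P̈ denote the second derivative at τ of the operator family τ' ↦ (x ↦ ⟨Φ(τ'), x⟩ Φ(τ')). Then the operator norm of the composition Q ∘ P̈ ∘ P equals ‖Q Φ''(τ)‖, the norm of the component of the second derivative of the eigenpath orthogonal to Φ(τ). -/

import Mathlib

open scoped ComplexInnerProductSpace


noncomputable def myB {H : Type*} [NormedAddCommGroup H] [InnerProductSpace ℂ H] :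
    H →L[ℝ] H →L[ℝ] (H →L[ℂ] H) :=
  LinearMap.mkContinuous₂
    (LinearMap.mk₂ ℝ (fun u v => (innerSL ℂ u).smulRight v)
      (fun u u' v => by ext x; simp [inner_add_left]; module)
      (fun r u v => by
        ext x
        simp only [LinearMap.mk₂_apply, ContinuousLinearMap.smulRight_apply,
          innerSL_apply_apply, ContinuousLinearMap.coe_smul', Pi.smul_apply]
        rw [← algebraMap_smul ℂ r u, inner_smul_left]
        rw [mul_smul]
        simp [Complex.conj_ofReal, algebraMap_smul])
      (fun u v v' => by ext x; simp)
      (fun r u v => by ext x; simp; module))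
    1
    (fun u v => by
      simp only [LinearMap.mk₂_apply, one_mul]
      calc ‖(innerSL ℂ u).smulRight v‖ = ‖innerSL ℂ u‖ * ‖v‖ :=
            ContinuousLinearMap.norm_smulRight_apply _ _
        _ ≤ ‖u‖ * ‖v‖ := by rw [innerSL_apply_norm]; )

lemma myB_apply {H : Type*} [NormedAddCommGroup H] [InnerProductSpace ℂ H] (u v x : H) :
    myB u v x = ⟪u, x⟫ • v := rfl

set_option maxHeartbeats 1000000 in
/-- Let `Φ : ℝ → H` be twice continuously differentiable with
`‖Φ τ‖ = 1` and gauge `⟪Φ τ, Φ' τ⟫ = 0` for all `τ`. Fix `τ`, let `P` be the rank-one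
projector onto `Φ τ`, `Q = id − P`, and let `P̈` be the second derivative at `τ` of the
projector family `τ' ↦ (x ↦ ⟪Φ τ', x⟫ Φ τ')`. Then `‖Q ∘ P̈ ∘ P‖ = ‖Q (Φ'' τ)‖`,
the norm of the component of `Φ''(τ)` orthogonal to `Φ τ`. -/
theorem opNorm_Q_Pddot_P_eq_norm_Q_Phi_ddot
    {H : Type*} [NormedAddCommGroup H] [InnerProductSpace ℂ H]
    (Φ : ℝ → H) (hΦ : ContDiff ℝ 2 Φ)
    (hnorm : ∀ t, ‖Φ t‖ = 1)
    (hgauge : ∀ t, ⟪Φ t, deriv Φ t⟫ = 0)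
    (τ : ℝ)
    (Pfam : ℝ → H →L[ℂ] H)
    (hPfam : ∀ t x, Pfam t x = ⟪Φ t, x⟫ • Φ t)
    (Q : H →L[ℂ] H)
    (hQ : ∀ x, Q x = x - ⟪Φ τ, x⟫ • Φ τ) :
    ‖Q.comp ((deriv (deriv Pfam) τ).comp (Pfam τ))‖
      = ‖Q (deriv (deriv Φ) τ)‖ := by
  have hΦdiff : Differentiable ℝ Φ := hΦ.differentiable (by norm_num)
  have hΦ' : ContDiff ℝ 1 (deriv Φ) := by
    exact (contDiff_succ_iff_deriv.mp (by exact_mod_cast hΦ : ContDiff ℝ (1+1) Φ)).2.2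
  have hΦ'diff : Differentiable ℝ (deriv Φ) := hΦ'.differentiable one_ne_zero
  -- Pfam in terms of myB
  have hP : Pfam = fun t => myB (Φ t) (Φ t) := by
    funext t; ext x; rw [hPfam]; rfl
  -- first derivative
  have hD1 : ∀ t, HasDerivAt Pfam
      (myB (deriv Φ t) (Φ t) + myB (Φ t) (deriv Φ t)) t := by
    intro t
    rw [hP]
    have h0 : HasFDerivAt (myB (H := H)) (myB (H := H)) (Φ t) :=
      ContinuousLinearMap.hasFDerivAt _
    have h1 : HasDerivAt (fun t => myB (Φ t)) (myB (deriv Φ t)) t :=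
      HasFDerivAt.comp_hasDerivAt (l := fun y => myB y) t h0 (hΦdiff t).hasDerivAt
    exact h1.clm_apply (hΦdiff t).hasDerivAt
  have hderiv1 : deriv Pfam = fun t => myB (deriv Φ t) (Φ t) + myB (Φ t) (deriv Φ t) :=
    funext fun t => (hD1 t).deriv
  -- second derivative at τ
  have hD2 : HasDerivAt (deriv Pfam)
      (myB (deriv (deriv Φ) τ) (Φ τ) + myB (deriv Φ τ) (deriv Φ τ)
        + (myB (deriv Φ τ) (deriv Φ τ) + myB (Φ τ) (deriv (deriv Φ) τ))) τ := by
    rw [hderiv1]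
    have h0a : HasFDerivAt (myB (H := H)) (myB (H := H)) (deriv Φ τ) :=
      ContinuousLinearMap.hasFDerivAt _
    have h0b : HasFDerivAt (myB (H := H)) (myB (H := H)) (Φ τ) :=
      ContinuousLinearMap.hasFDerivAt _
    have h1a : HasDerivAt (fun t => myB (deriv Φ t)) (myB (deriv (deriv Φ) τ)) τ :=
      HasFDerivAt.comp_hasDerivAt (l := fun y => myB y) τ h0a (hΦ'diff τ).hasDerivAt
    have h1b : HasDerivAt (fun t => myB (Φ t)) (myB (deriv Φ τ)) τ :=
      HasFDerivAt.comp_hasDerivAt (l := fun y => myB y) τ h0b (hΦdiff τ).hasDerivAt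
    have ha : HasDerivAt (fun t => myB (deriv Φ t) (Φ t))
        (myB (deriv (deriv Φ) τ) (Φ τ) + myB (deriv Φ τ) (deriv Φ τ)) τ :=
      h1a.clm_apply (hΦdiff τ).hasDerivAt
    have hb : HasDerivAt (fun t => myB (Φ t) (deriv Φ t))
        (myB (deriv Φ τ) (deriv Φ τ) + myB (Φ τ) (deriv (deriv Φ) τ)) τ :=
      h1b.clm_apply (hΦ'diff τ).hasDerivAt
    exact ha.add hb
  have hPdd : deriv (deriv Pfam) τ
      = myB (deriv (deriv Φ) τ) (Φ τ) + myB (deriv Φ τ) (deriv Φ τ)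
        + (myB (deriv Φ τ) (deriv Φ τ) + myB (Φ τ) (deriv (deriv Φ) τ)) := hD2.deriv
  -- key inner product facts
  have hself : ⟪Φ τ, Φ τ⟫ = (1 : ℂ) := by
    rw [inner_self_eq_norm_sq_to_K, hnorm]; norm_num
  have hg : ⟪Φ τ, deriv Φ τ⟫ = 0 := hgauge τ
  have hg' : ⟪deriv Φ τ, Φ τ⟫ = 0 := by
    rw [← inner_conj_symm, hg]; simp
  have hQΦ : Q (Φ τ) = 0 := by rw [hQ, hself, one_smul, sub_self]
  -- the composed operator acts as a rank-one map
  set w := Q (deriv (deriv Φ) τ) with hw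
  have hT : ∀ x, (Q.comp ((deriv (deriv Pfam) τ).comp (Pfam τ))) x = ⟪Φ τ, x⟫ • w := by
    intro x
    simp only [ContinuousLinearMap.comp_apply, hPdd, hPfam,
      ContinuousLinearMap.add_apply, myB_apply, inner_smul_right, hself, hg, hg',
      mul_one, mul_zero, zero_smul, add_zero, zero_add, one_smul, map_add, map_smul,
      hQΦ, smul_zero]
    rfl
  -- compute the operator norm
  apply le_antisymm
  · refine ContinuousLinearMap.opNorm_le_bound _ (norm_nonneg w) fun x => ?_
    rw [hT, norm_smul]
    calc ‖⟪Φ τ, x⟫‖ * ‖w‖ ≤ ‖Φ τ‖ * ‖x‖ * ‖w‖ := by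
          gcongr; exact norm_inner_le_norm _ _
      _ = ‖w‖ * ‖x‖ := by rw [hnorm]; ring
  · have : ‖w‖ = ‖(Q.comp ((deriv (deriv Pfam) τ).comp (Pfam τ))) (Φ τ)‖ := by
      rw [hT, hself, one_smul]
    rw [this]
    calc ‖(Q.comp ((deriv (deriv Pfam) τ).comp (Pfam τ))) (Φ τ)‖
        ≤ ‖Q.comp ((deriv (deriv Pfam) τ).comp (Pfam τ))‖ * ‖Φ τ‖ :=
          ContinuousLinearMap.le_opNorm _ _
      _ = _ := by rw [hnorm]; ring
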